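/- Let v_1,...,v_m ∈ ℝ^n. Then: (a) the number of {v_1,...,v_m}-indecomposable points in ℝP_+^{n-1} is finite; and (b) every nonzero vector u ∈ Σ_{i=1}^m ℝ v_i can be written as u = u_1 + ⋯ + u_l where each u_j is a {v_1,...,v_m}-indecomposable vector and (u,v)(u_j,v) ≥ 0 for every j = 1,...,l and every v ∈ {v_1,...,v_m}. -/

import Mathlib

noncomputable section

/-- The standard inner product on `ℝ^n`. -/
def dotR {n : ℕ} (u v : Fin n → ℝ) : ℝ := ∑ i, u i * v i

/-- `[u] = [u']` : positive equivalence of nonzero vectors (`u' = r • u` with `r > 0`). -/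
def PosEq {n : ℕ} (u u' : Fin n → ℝ) : Prop := ∃ r : ℝ, 0 < r ∧ u' = r • u

/-- `u` is `{v₁,…,vₘ}`-decomposable. -/
def Decomp {n m : ℕ} (v : Fin m → Fin n → ℝ) (u : Fin n → ℝ) : Prop :=
  ∃ u' u'' : Fin n → ℝ, u' ≠ 0 ∧ u'' ≠ 0 ∧
    u' ∈ Submodule.span ℝ (Set.range v) ∧ u'' ∈ Submodule.span ℝ (Set.range v) ∧
    u = u' + u'' ∧ ¬ PosEq u u' ∧ ¬ PosEq u u'' ∧
    ∀ i, 0 ≤ dotR u' (v i) * dotR u'' (v i)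

/-- `u` is `{v₁,…,vₘ}`-indecomposable. -/
def Indecomp {n m : ℕ} (v : Fin m → Fin n → ℝ) (u : Fin n → ℝ) : Prop :=
  u ≠ 0 ∧ u ∈ Submodule.span ℝ (Set.range v) ∧ ¬ Decomp v u

lemma dotR_add {n : ℕ} (x y w : Fin n → ℝ) : dotR (x + y) w = dotR x w + dotR y w := by
  simp [dotR, add_mul, Finset.sum_add_distrib]

lemma dotR_sub {n : ℕ} (x y w : Fin n → ℝ) : dotR (x - y) w = dotR x w - dotR y w := by
  simp [dotR, sub_mul, Finset.sum_sub_distrib]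

lemma dotR_smul {n : ℕ} (r : ℝ) (x w : Fin n → ℝ) : dotR (r • x) w = r * dotR x w := by
  simp [dotR, Finset.mul_sum, mul_assoc]

lemma dotR_zero {n : ℕ} (w : Fin n → ℝ) : dotR (0 : Fin n → ℝ) w = 0 := by
  simp [dotR]

lemma dotR_comm {n : ℕ} (x w : Fin n → ℝ) : dotR x w = dotR w x := by
  simp [dotR, mul_comm]

lemma eq_zero_of_forall_dot {n m : ℕ} (v : Fin m → Fin n → ℝ) {u : Fin n → ℝ}
    (hu : u ∈ Submodule.span ℝ (Set.range v)) (h : ∀ i, dotR u (v i) = 0) : u = 0 := by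
  have key : dotR u u = 0 := by
    have H : ∀ w ∈ Submodule.span ℝ (Set.range v), dotR w u = 0 := by
      intro w hw
      induction hw using Submodule.span_induction with
      | mem x hx => obtain ⟨i, rfl⟩ := hx; rw [dotR_comm]; exact h i
      | zero => exact dotR_zero u
      | add x y hx hy ihx ihy => rw [dotR_add, ihx, ihy, add_zero]
      | smul r x hx ih => rw [dotR_smul, ih, mul_zero]
    exact H u hu
  funext i
  have h2 : ∀ j ∈ Finset.univ, (0:ℝ) ≤ u j * u j := fun j _ => mul_self_nonneg _
  have h3 := (Finset.sum_eq_zero_iff_of_nonneg h2).1 key i (Finset.mem_univ i)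
  exact mul_self_eq_zero.mp h3

def Compat {n m : ℕ} (v : Fin m → Fin n → ℝ) (u w : Fin n → ℝ) : Prop :=
  ∀ i, (dotR u (v i) = 0 → dotR w (v i) = 0) ∧ 0 ≤ dotR u (v i) * dotR w (v i)

lemma core {n m : ℕ} (v : Fin m → Fin n → ℝ) {u d₀ : Fin n → ℝ} (hu : u ≠ 0)
    (huV : u ∈ Submodule.span ℝ (Set.range v)) (hdV : d₀ ∈ Submodule.span ℝ (Set.range v))
    (hz : ∀ i, dotR u (v i) = 0 → dotR d₀ (v i) = 0)
    (hnp : ∀ c : ℝ, d₀ ≠ c • u) :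
    ∃ w₁ w₂ : Fin n → ℝ, w₁ ≠ 0 ∧ w₂ ≠ 0 ∧
      w₁ ∈ Submodule.span ℝ (Set.range v) ∧ w₂ ∈ Submodule.span ℝ (Set.range v) ∧
      u = w₁ + w₂ ∧ Compat v u w₁ ∧ Compat v u w₂ ∧
      (∃ i, dotR u (v i) ≠ 0 ∧ dotR w₁ (v i) = 0) ∧
      (∃ i, dotR u (v i) ≠ 0 ∧ dotR w₂ (v i) = 0) := by
  classical
  set a : Fin m → ℝ := fun i => dotR u (v i) with ha
  set b : Fin m → ℝ := fun i => dotR d₀ (v i) with hb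
  -- there exist two indices with distinct ratios
  have hratio : ∃ i j, a i ≠ 0 ∧ a j ≠ 0 ∧ b i / a i ≠ b j / a j := by
    by_contra hall
    push_neg at hall
    have hne : ∃ i, a i ≠ 0 := by
      by_contra h
      push_neg at h
      exact hu (eq_zero_of_forall_dot v huV h)
    obtain ⟨i₁, hi₁⟩ := hne
    apply hnp (b i₁ / a i₁)
    have hzero : ∀ i, dotR (d₀ - (b i₁ / a i₁) • u) (v i) = 0 := by
      intro i
      rw [dotR_sub, dotR_smul]
      by_cases hai : a i = 0
      · have hbi : b i = 0 := hz i hai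
        show b i - b i₁ / a i₁ * a i = 0
        rw [hbi, hai, mul_zero, sub_zero]
      · have heq := hall i i₁ hai hi₁
        show b i - b i₁ / a i₁ * a i = 0
        rw [← heq]
        field_simp
        ring
    have h0 : d₀ - (b i₁ / a i₁) • u = 0 :=
      eq_zero_of_forall_dot v
        (Submodule.sub_mem _ hdV (Submodule.smul_mem _ _ huV)) hzero
    exact sub_eq_zero.mp h0
  obtain ⟨i', j', hai', haj', hne'⟩ := hratio
  -- WLOG the ratio at i₀ is smaller
  obtain ⟨i₀, j₀, hai₀, haj₀, hlt⟩ :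
      ∃ i j, a i ≠ 0 ∧ a j ≠ 0 ∧ b i / a i < b j / a j := by
    rcases hne'.lt_or_gt with h | h
    · exact ⟨i', j', hai', haj', h⟩
    · exact ⟨j', i', haj', hai', h⟩
  set c : ℝ := (b i₀ / a i₀ + b j₀ / a j₀) / 2 with hc
  set e : Fin m → ℝ := fun i => b i / a i - c with he
  have hei₀ : e i₀ < 0 := by
    show b i₀ / a i₀ - c < 0
    rw [hc]; linarith
  have hej₀ : 0 < e j₀ := by
    show 0 < b j₀ / a j₀ - c
    rw [hc]; linarith
  set d : Fin n → ℝ := d₀ - c • u with hd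
  have hdot : ∀ (t : ℝ) (i : Fin m), dotR (u + t • d) (v i) = a i * (1 + t * e i) := by
    intro t i
    have h1 : dotR (u + t • d) (v i) = a i + t * (b i - c * a i) := by
      rw [hd, dotR_add, dotR_smul, dotR_sub, dotR_smul]
    rw [h1]
    by_cases hai : a i = 0
    · have hbi : b i = 0 := hz i hai
      rw [hai, hbi]
      ring
    · show a i + t * (b i - c * a i) = a i * (1 + t * (b i / a i - c))
      have hba : a i * (b i / a i) = b i := by
        rw [mul_comm, div_mul_cancel₀ _ hai]
      linear_combination (-t) * hba
  -- choose the two critical times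
  have hmemi₀ : i₀ ∈ Finset.univ.filter (fun i => e i < 0 ∧ a i ≠ 0) := by
    simp [hei₀, hai₀]
  have hmemj₀ : j₀ ∈ Finset.univ.filter (fun i => 0 < e i ∧ a i ≠ 0) := by
    simp [hej₀, haj₀]
  obtain ⟨ip, hipmem, hipmin⟩ :=
    (Finset.univ.filter (fun i => e i < 0 ∧ a i ≠ 0)).exists_min_image
      (fun i => -(1 / e i)) ⟨i₀, hmemi₀⟩
  obtain ⟨im, himmem, himmax⟩ :=
    (Finset.univ.filter (fun i => 0 < e i ∧ a i ≠ 0)).exists_max_image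
      (fun i => -(1 / e i)) ⟨j₀, hmemj₀⟩
  have hipe : e ip < 0 ∧ a ip ≠ 0 := by simpa using hipmem
  have hime : 0 < e im ∧ a im ≠ 0 := by simpa using himmem
  set tp : ℝ := -(1 / e ip) with htp
  set tm : ℝ := -(1 / e im) with htm
  have htp_pos : 0 < tp := by
    have : 1 / e ip < 0 := one_div_neg.mpr hipe.1
    rw [htp]; linarith
  have htm_neg : tm < 0 := by
    have : 0 < 1 / e im := one_div_pos.mpr hime.1
    rw [htm]; linarith
  have hipne : e ip ≠ 0 := ne_of_lt hipe.1
  have himne : e im ≠ 0 := ne_of_gt hime.1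
  have htpe : 1 + tp * e ip = 0 := by
    rw [htp, neg_mul, one_div, inv_mul_cancel₀ hipne]; ring
  have htme : 1 + tm * e im = 0 := by
    rw [htm, neg_mul, one_div, inv_mul_cancel₀ himne]; ring
  have hboundp : ∀ i, a i ≠ 0 → 0 ≤ 1 + tp * e i := by
    intro i hai
    rcases lt_trichotomy (e i) 0 with hei | hei | hei
    · have hein : e i ≠ 0 := ne_of_lt hei
      have hle := hipmin i (by simp [hei, hai])
      have h2 : (-(1 / e i)) * e i ≤ tp * e i :=
        mul_le_mul_of_nonpos_right hle (le_of_lt hei)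
      have h3 : (-(1 / e i)) * e i = -1 := by
        rw [neg_mul, one_div, inv_mul_cancel₀ hein]
      rw [h3] at h2
      linarith
    · rw [hei]; simp
    · nlinarith [mul_pos htp_pos hei]
  have hboundm : ∀ i, a i ≠ 0 → 0 ≤ 1 + tm * e i := by
    intro i hai
    rcases lt_trichotomy (e i) 0 with hei | hei | hei
    · nlinarith [mul_pos_of_neg_of_neg htm_neg hei]
    · rw [hei]; simp
    · have hein : e i ≠ 0 := ne_of_gt hei
      have hle := himmax i (by simp [hei, hai])
      have h2 : (-(1 / e i)) * e i ≤ tm * e i :=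
        mul_le_mul_of_nonneg_right hle (le_of_lt hei)
      have h3 : (-(1 / e i)) * e i = -1 := by
        rw [neg_mul, one_div, inv_mul_cancel₀ hein]
      rw [h3] at h2
      linarith
  -- assemble the two pieces
  have hts : 0 < tp - tm := by linarith
  have htsne : tp - tm ≠ 0 := ne_of_gt hts
  set lam : ℝ := tp / (tp - tm) with hlam
  set mu : ℝ := -tm / (tp - tm) with hmu
  have hlam_pos : 0 < lam := div_pos htp_pos hts
  have hmu_pos : 0 < mu := div_pos (by linarith) hts
  set w₁ : Fin n → ℝ := lam • (u + tm • d) with hw₁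
  set w₂ : Fin n → ℝ := mu • (u + tp • d) with hw₂
  have hdot₁ : ∀ i, dotR w₁ (v i) = lam * (a i * (1 + tm * e i)) := by
    intro i; rw [hw₁, dotR_smul, hdot]
  have hdot₂ : ∀ i, dotR w₂ (v i) = mu * (a i * (1 + tp * e i)) := by
    intro i; rw [hw₂, dotR_smul, hdot]
  have h1pm : 0 < 1 + tm * e i₀ := by nlinarith [mul_pos_of_neg_of_neg htm_neg hei₀]
  have h1pp : 0 < 1 + tp * e j₀ := by nlinarith [mul_pos htp_pos hej₀]
  have hw₁ne : w₁ ≠ 0 := by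
    intro h0
    have := hdot₁ i₀
    rw [h0, dotR_zero] at this
    have : a i₀ * (1 + tm * e i₀) = 0 := by
      rcases mul_eq_zero.mp this.symm with h | h
      · exact absurd h (ne_of_gt hlam_pos)
      · exact h
    rcases mul_eq_zero.mp this with h | h
    · exact hai₀ h
    · linarith
  have hw₂ne : w₂ ≠ 0 := by
    intro h0
    have := hdot₂ j₀
    rw [h0, dotR_zero] at this
    have : a j₀ * (1 + tp * e j₀) = 0 := by
      rcases mul_eq_zero.mp this.symm with h | h
      · exact absurd h (ne_of_gt hmu_pos)
      · exact h
    rcases mul_eq_zero.mp this with h | h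
    · exact haj₀ h
    · linarith
  have hdVmem : d ∈ Submodule.span ℝ (Set.range v) :=
    Submodule.sub_mem _ hdV (Submodule.smul_mem _ _ huV)
  have hw₁V : w₁ ∈ Submodule.span ℝ (Set.range v) :=
    Submodule.smul_mem _ _ (Submodule.add_mem _ huV (Submodule.smul_mem _ _ hdVmem))
  have hw₂V : w₂ ∈ Submodule.span ℝ (Set.range v) :=
    Submodule.smul_mem _ _ (Submodule.add_mem _ huV (Submodule.smul_mem _ _ hdVmem))
  have hsum : u = w₁ + w₂ := by
    rw [hw₁, hw₂]
    funext x
    have hx : (lam • (u + tm • d) + mu • (u + tp • d)) x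
        = lam * (u x + tm * d x) + mu * (u x + tp * d x) := rfl
    rw [hx, hlam, hmu]
    field_simp
    ring
  have hcomp₁ : Compat v u w₁ := by
    intro i
    constructor
    · intro hai
      rw [hdot₁ i]
      have : a i = 0 := hai
      rw [this]; ring
    · by_cases hai : a i = 0
      · rw [show dotR u (v i) = a i from rfl, hai]; simp
      · rw [show dotR u (v i) = a i from rfl, hdot₁ i]
        have hb := hboundm i hai
        nlinarith [mul_nonneg (le_of_lt hlam_pos) hb, sq_nonneg (a i)]
  have hcomp₂ : Compat v u w₂ := by
    intro i
    constructor
    · intro hai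
      rw [hdot₂ i]
      have : a i = 0 := hai
      rw [this]; ring
    · by_cases hai : a i = 0
      · rw [show dotR u (v i) = a i from rfl, hai]; simp
      · rw [show dotR u (v i) = a i from rfl, hdot₂ i]
        have hb := hboundp i hai
        nlinarith [mul_nonneg (le_of_lt hmu_pos) hb, sq_nonneg (a i)]
  refine ⟨w₁, w₂, hw₁ne, hw₂ne, hw₁V, hw₂V, hsum, hcomp₁, hcomp₂, ⟨im, hime.2, ?_⟩,
    ⟨ip, hipe.2, ?_⟩⟩
  · rw [hdot₁ im, htme]; ring
  · rw [hdot₂ ip, htpe]; ring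

lemma sign_trans {a w p : ℝ} (h0 : w = 0 → p = 0) (h1 : 0 ≤ a * w) (h2 : 0 ≤ w * p) :
    0 ≤ a * p := by
  rcases eq_or_ne w 0 with h | h
  · simp [h0 h]
  · rcases h.lt_or_gt with hw | hw
    · nlinarith [mul_nonneg h1 h2, mul_pos_of_neg_of_neg hw hw]
    · nlinarith [mul_nonneg h1 h2, mul_pos hw hw]

lemma sign_pair {a x y : ℝ} (ha : a ≠ 0) (h1 : 0 ≤ a * x) (h2 : 0 ≤ a * y) : 0 ≤ x * y := by
  rcases ha.lt_or_gt with h | h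
  · nlinarith [mul_nonneg h1 h2, mul_pos_of_neg_of_neg h h]
  · nlinarith [mul_nonneg h1 h2, mul_pos h h]

lemma both_zero {x y : ℝ} (hs : x + y = 0) (hp : 0 ≤ x * y) : x = 0 := by
  have hy : y = -x := by linarith
  have h1 : x * x ≤ 0 := by rw [hy] at hp; nlinarith
  exact mul_self_eq_zero.mp (le_antisymm h1 (mul_self_nonneg x))

lemma compat_trans {n m : ℕ} {v : Fin m → Fin n → ℝ} {u w p : Fin n → ℝ}
    (h1 : Compat v u w) (h2 : Compat v w p) : Compat v u p := by
  intro i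
  obtain ⟨hz1, hs1⟩ := h1 i
  obtain ⟨hz2, hs2⟩ := h2 i
  exact ⟨fun h => hz2 (hz1 h), sign_trans hz2 hs1 hs2⟩

lemma partB {n m : ℕ} (v : Fin m → Fin n → ℝ) :
    ∀ (k : ℕ) (u : Fin n → ℝ), u ≠ 0 → u ∈ Submodule.span ℝ (Set.range v) →
      (Finset.univ.filter (fun i => dotR u (v i) ≠ 0)).card ≤ k →
      ∃ (l : ℕ) (c : Fin l → Fin n → ℝ),
        (∀ j, Indecomp v (c j)) ∧ u = ∑ j, c j ∧ ∀ j, Compat v u (c j) := by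
  intro k
  induction k with
  | zero =>
    intro u hu huV hcard
    exfalso
    apply hu
    apply eq_zero_of_forall_dot v huV
    intro i
    by_contra h
    have hmem : i ∈ Finset.univ.filter (fun i => dotR u (v i) ≠ 0) := by simp [h]
    have := Finset.card_pos.mpr ⟨i, hmem⟩
    omega
  | succ k ih =>
    intro u hu huV hcard
    by_cases hd : Decomp v u
    · obtain ⟨u', u'', h1, h2, h1V, h2V, hsum, hp1, hp2, hsign⟩ := hd
      have hz : ∀ i, dotR u (v i) = 0 → dotR u' (v i) = 0 := by
        intro i hi
        have hsumi : dotR u' (v i) + dotR u'' (v i) = 0 := by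
          rw [← dotR_add, ← hsum, hi]
        exact both_zero hsumi (hsign i)
      have hnp : ∀ c : ℝ, u' ≠ c • u := by
        intro c hcu
        rcases lt_trichotomy c 0 with hco | hco | hco
        · apply hp2
          refine ⟨1 - c, by linarith, ?_⟩
          have h'' : u'' = u - u' := by rw [hsum]; abel
          rw [h'', hcu, sub_smul, one_smul]
        · apply h1
          rw [hcu, hco, zero_smul]
        · exact hp1 ⟨c, hco, hcu⟩
      obtain ⟨w₁, w₂, hw1, hw2, hw1V, hw2V, hwsum, hc1, hc2, ⟨i₁, hi₁a, hi₁z⟩,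
        ⟨i₂, hi₂a, hi₂z⟩⟩ := core v hu huV h1V hz hnp
      have hcardlt : ∀ (w : Fin n → ℝ), Compat v u w →
          (∃ i, dotR u (v i) ≠ 0 ∧ dotR w (v i) = 0) →
          (Finset.univ.filter (fun i => dotR w (v i) ≠ 0)).card ≤ k := by
        rintro w hcw ⟨i₁, ha1, hz1⟩
        have hss : Finset.univ.filter (fun i => dotR w (v i) ≠ 0) ⊂
            Finset.univ.filter (fun i => dotR u (v i) ≠ 0) := by
          rw [Finset.ssubset_iff_of_subset]
          · exact ⟨i₁, by simp [ha1], by simp [hz1]⟩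
          · intro i hi
            simp only [Finset.mem_filter, Finset.mem_univ, true_and] at hi ⊢
            intro h0
            exact hi ((hcw i).1 h0)
        have := Finset.card_lt_card hss
        omega
      obtain ⟨l₁, c₁, hind₁, hsum₁, hcomp₁⟩ :=
        ih w₁ hw1 hw1V (hcardlt w₁ hc1 ⟨i₁, hi₁a, hi₁z⟩)
      obtain ⟨l₂, c₂, hind₂, hsum₂, hcomp₂⟩ :=
        ih w₂ hw2 hw2V (hcardlt w₂ hc2 ⟨i₂, hi₂a, hi₂z⟩)
      refine ⟨l₁ + l₂, Fin.append c₁ c₂, ?_, ?_, ?_⟩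
      · intro j
        refine Fin.addCases (fun i => ?_) (fun i => ?_) j
        · rw [Fin.append_left]; exact hind₁ i
        · rw [Fin.append_right]; exact hind₂ i
      · rw [Fin.sum_univ_add]
        simp only [Fin.append_left, Fin.append_right]
        rw [← hsum₁, ← hsum₂, hwsum]
      · intro j
        refine Fin.addCases (fun i => ?_) (fun i => ?_) j
        · rw [Fin.append_left]; exact compat_trans hc1 (hcomp₁ i)
        · rw [Fin.append_right]; exact compat_trans hc2 (hcomp₂ i)
    · refine ⟨1, fun _ => u, fun j => ⟨hu, huV, hd⟩, by simp, fun j i => ?_⟩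
      exact ⟨fun h => h, mul_self_nonneg _⟩

lemma partA {n m : ℕ} (v : Fin m → Fin n → ℝ) :
    ∃ T : Finset (Fin n → ℝ), ∀ u : Fin n → ℝ, Indecomp v u → ∃ w ∈ T, PosEq w u := by
  classical
  set P : Finset (Fin m) → (Fin n → ℝ) → Prop := fun S w =>
    w ≠ 0 ∧ w ∈ Submodule.span ℝ (Set.range v) ∧ ∀ i ∈ S, dotR w (v i) = 0 with hP
  set g : Finset (Fin m) → (Fin n → ℝ) := fun S =>
    if h : ∃ w, P S w then h.choose else 0 with hg
  refine ⟨(Finset.univ.image g) ∪ (Finset.univ.image (fun S => -(g S))), ?_⟩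
  rintro u ⟨hu0, huV, hnd⟩
  set S : Finset (Fin m) := Finset.univ.filter (fun i => dotR u (v i) = 0) with hS
  have hex : ∃ w, P S w := ⟨u, hu0, huV, fun i hi => by
    simpa [hS] using (Finset.mem_filter.mp hi).2⟩
  have hgP : P S (g S) := by
    rw [hg]
    simp only
    rw [dif_pos hex]
    exact hex.choose_spec
  obtain ⟨hg0, hgV, hgz⟩ := hgP
  have hprop : ∃ c : ℝ, g S = c • u := by
    by_contra hnp
    push_neg at hnp
    have hz : ∀ i, dotR u (v i) = 0 → dotR (g S) (v i) = 0 := fun i hi =>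
      hgz i (by simp [hS, hi])
    obtain ⟨w₁, w₂, h1, h2, h1V, h2V, hsum, hc1, hc2, ⟨i₁, hi₁a, hi₁z⟩, ⟨i₂, hi₂a, hi₂z⟩⟩ :=
      core v hu0 huV hgV hz hnp
    apply hnd
    refine ⟨w₁, w₂, h1, h2, h1V, h2V, hsum, ?_, ?_, ?_⟩
    · rintro ⟨r, hr, hw⟩
      apply hi₁a
      have h3 : dotR w₁ (v i₁) = r * dotR u (v i₁) := by rw [hw, dotR_smul]
      rw [hi₁z] at h3
      have := h3.symm
      rcases mul_eq_zero.mp this with h | h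
      · exact absurd h (ne_of_gt hr)
      · exact h
    · rintro ⟨r, hr, hw⟩
      apply hi₂a
      have h3 : dotR w₂ (v i₂) = r * dotR u (v i₂) := by rw [hw, dotR_smul]
      rw [hi₂z] at h3
      rcases mul_eq_zero.mp h3.symm with h | h
      · exact absurd h (ne_of_gt hr)
      · exact h
    · intro i
      by_cases hai : dotR u (v i) = 0
      · rw [(hc1 i).1 hai, zero_mul]
      · exact sign_pair hai ((hc1 i).2) ((hc2 i).2)
  obtain ⟨c, hcu⟩ := hprop
  have hcne : c ≠ 0 := by
    intro h0
    rw [h0, zero_smul] at hcu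
    exact hg0 hcu
  rcases hcne.lt_or_gt with hc | hc
  · refine ⟨-(g S), ?_, ?_⟩
    · apply Finset.mem_union_right
      exact Finset.mem_image.mpr ⟨S, Finset.mem_univ S, rfl⟩
    · refine ⟨(-c)⁻¹, inv_pos.mpr (by linarith), ?_⟩
      rw [hcu]
      rw [← neg_smul, smul_smul, inv_mul_cancel₀ (by linarith : (-c : ℝ) ≠ 0), one_smul]
  · refine ⟨g S, ?_, ?_⟩
    · apply Finset.mem_union_left
      exact Finset.mem_image.mpr ⟨S, Finset.mem_univ S, rfl⟩
    · refine ⟨c⁻¹, inv_pos.mpr hc, ?_⟩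
      rw [hcu, smul_smul, inv_mul_cancel₀ hcne, one_smul]

/-- Lemma 2.3(2): (a) up to positive scaling there are only finitely many
`{v₁,…,vₘ}`-indecomposable vectors (i.e. finitely many indecomposable points of
`ℝP₊ⁿ⁻¹`), and (b) every nonzero vector `u` of the span decomposes as a sum
`u = u₁ + ⋯ + u_l` of indecomposable vectors with `(u,vᵢ)(uⱼ,vᵢ) ≥ 0` for all `i, j`. -/
theorem indecomposable_finite_and_decomposition {n m : ℕ} (v : Fin m → Fin n → ℝ) :
    (∃ T : Finset (Fin n → ℝ), ∀ u : Fin n → ℝ, Indecomp v u → ∃ w ∈ T, PosEq w u) ∧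
    (∀ u : Fin n → ℝ, u ≠ 0 → u ∈ Submodule.span ℝ (Set.range v) →
      ∃ (l : ℕ) (c : Fin l → Fin n → ℝ),
        (∀ j, Indecomp v (c j)) ∧ u = ∑ j, c j ∧
        ∀ (j : Fin l) (i : Fin m), 0 ≤ dotR u (v i) * dotR (c j) (v i)) := by
  refine ⟨partA v, fun u hu huV => ?_⟩
  obtain ⟨l, c, hind, hsum, hcomp⟩ :=
    partB v (Finset.univ.filter (fun i => dotR u (v i) ≠ 0)).card u hu huV le_rfl
  exact ⟨l, c, hind, hsum, fun j i => (hcomp j i).2⟩
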